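/- Let a,b,c,d,e,h be positive real numbers, χ := ac/(bd), and let θ₁,θ₂,σ₁,σ₂ ∈ Λ₁ be odd. Define the coordinate tuples B := (√2·ab/e)·(1, 1, 1, θ₁θ₂/2 | hθ₁, h⁻¹θ₂, −h⁻¹θ₂, hθ₁) and D := (x₁, x₂, −y, z | ξ₁⁺, ξ₂⁺, ξ₁⁻, ξ₂⁻) with x₁ := √2·bd²/(ae), x₂ := √2·ac²/(be), y := √2·cd/e, ξ₁⁺ := −χ^{−1/2}·y·h⁻¹σ₁, ξ₂⁺ := −χ^{−1/2}·y·hσ₂, ξ₁⁻ := −χ^{1/2}·y·hσ₂, ξ₂⁻ := χ^{1/2}·y·h⁻¹σ₁, z := yσ₁σ₂/2, and let ⟨B,D⟩ := (1/2)(x₁^B x₂^D + x₂^B x₁^D) − y^B y^D + (1/2)(ξ₁⁺{}^B ξ₁⁻{}^D − ξ₂⁺{}^B ξ₂⁻{}^D − ξ₁⁻{}^B ξ₁⁺{}^D + ξ₂⁻{}^B ξ₂⁺{}^D) + z^B z^D. Then e²·⟨B,D⟩ = (ac+bd)²·(1 + h⁻²σ₁θ₂/(2(√χ + √χ⁻¹))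 + h²σ₂θ₁/(2(√χ + √χ⁻¹)))², i.e. the super Ptolemy relation ef = (ac+bd)(1 + h⁻²σ₁θ₂/(2(√χ+√χ⁻¹)) + h²σ₂θ₁/(2(√χ+√χ⁻¹))) holds for f with f² = ⟨B,D⟩. -/

import Mathlib

/- STATEMENT 10 (Theorem 7.2 of the paper): the super Ptolemy relation
e²·⟨B,D⟩ = (ac+bd)²·(1 + h⁻²σ₁θ₂/(2(√χ+√χ⁻¹)) + h²σ₂θ₁/(2(√χ+√χ⁻¹)))². -/

noncomputable section

variable {V : Type*} [AddCommGroup V] [Module ℝ V]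

/-- Membership in the odd part Λ₁ of the Grassmann algebra. -/
def IsOdd (x : ExteriorAlgebra ℝ V) : Prop :=
  x ∈ CliffordAlgebra.evenOdd (0 : QuadraticForm ℝ V) 1


local notation "ιι" => CliffordAlgebra.ι (0 : QuadraticForm ℝ V)

lemma iota_swap (v w : V) : ιι v * ιι w = -(ιι w * ιι v) := by
  have h := CliffordAlgebra.ι_mul_ι_add_swap (Q := (0 : QuadraticForm ℝ V)) v w
  simp only [QuadraticMap.polar, QuadraticMap.zero_apply, sub_zero, sub_self, map_zero] at h
  linear_combination (norm := noncomm_ring) h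

lemma iota_anticomm (v : V) {y : ExteriorAlgebra ℝ V} (hy : IsOdd y) :
    ιι v * y = -(y * ιι v) := by
  induction y, hy using CliffordAlgebra.odd_induction with
  | ι w => exact iota_swap v w
  | add x y hx hy ihx ihy => rw [mul_add, add_mul, ihx, ihy, neg_add]
  | ι_mul_ι_mul m₁ m₂ x hx ih =>
      linear_combination (norm := noncomm_ring)
        (iota_swap v m₁) * (ιι m₂ * x) - ιι m₁ * (iota_swap v m₂) * x
          + (ιι m₁ * ιι m₂) * ih

lemma odd_anticomm {x y : ExteriorAlgebra ℝ V} (hx : IsOdd x) (hy : IsOdd y) :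
    x * y = -(y * x) := by
  induction x, hx using CliffordAlgebra.odd_induction with
  | ι v => exact iota_anticomm v hy
  | add x x' hx hx' ihx ihx' => rw [add_mul, mul_add, ihx, ihx', neg_add]
  | ι_mul_ι_mul m₁ m₂ x hx ih =>
      have h1 := iota_anticomm (V := V) m₁ hy
      have h2 := iota_anticomm (V := V) m₂ hy
      linear_combination (norm := noncomm_ring)
        (ιι m₁ * ιι m₂) * ih - ιι m₁ * h2 * x + h1 * (ιι m₂ * x)

lemma odd_sq {x : ExteriorAlgebra ℝ V} (hx : IsOdd x) : x * x = 0 := by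
  have h := odd_anticomm hx hx
  have h2 : x * x + x * x = 0 := by nth_rewrite 1 [h]; exact neg_add_cancel _
  have h3 : x * x = (1/2 : ℝ) • (x * x + x * x) := by rw [smul_add]; module
  rw [h3, h2, smul_zero]

/-- A coordinate tuple (x₁,x₂,y,z | ξ₁⁺,ξ₂⁺,ξ₁⁻,ξ₂⁻) in superspace ℝ^{2,2|4}. -/
structure STuple (V : Type*) [AddCommGroup V] [Module ℝ V] where
  x₁ : ExteriorAlgebra ℝ V
  x₂ : ExteriorAlgebra ℝ V
  y : ExteriorAlgebra ℝ V
  z : ExteriorAlgebra ℝ V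
  ξ₁p : ExteriorAlgebra ℝ V
  ξ₂p : ExteriorAlgebra ℝ V
  ξ₁m : ExteriorAlgebra ℝ V
  ξ₂m : ExteriorAlgebra ℝ V

/-- The Minkowski superpairing ⟨M,M′⟩. -/
def spair (M M' : STuple V) : ExteriorAlgebra ℝ V :=
  (1/2 : ℝ) • (M.x₁ * M'.x₂ + M.x₂ * M'.x₁) - M.y * M'.y
    + (1/2 : ℝ) • (M.ξ₁p * M'.ξ₁m - M.ξ₂p * M'.ξ₂m - M.ξ₁m * M'.ξ₁p
        + M.ξ₂m * M'.ξ₂p)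
    + M.z * M'.z

set_option maxHeartbeats 1000000 in
theorem stmt10 (a b c d e h χ : ℝ)
    (ha : 0 < a) (hb : 0 < b) (hc : 0 < c) (hd : 0 < d) (he : 0 < e)
    (hh : 0 < h) (hχ : χ = a * c / (b * d))
    (θ₁ θ₂ σ₁ σ₂ : ExteriorAlgebra ℝ V)
    (hθ₁ : IsOdd θ₁) (hθ₂ : IsOdd θ₂) (hσ₁ : IsOdd σ₁) (hσ₂ : IsOdd σ₂)
    -- the tuple B := (√2·ab/e)·(1,1,1,θ₁θ₂/2 | hθ₁, h⁻¹θ₂, −h⁻¹θ₂, hθ₁)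
    (BT : STuple V)
    (hBT : BT = ⟨algebraMap ℝ _ (Real.sqrt 2 * (a * b / e)),
                 algebraMap ℝ _ (Real.sqrt 2 * (a * b / e)),
                 algebraMap ℝ _ (Real.sqrt 2 * (a * b / e)),
                 (Real.sqrt 2 * (a * b / e) / 2) • (θ₁ * θ₂),
                 (Real.sqrt 2 * (a * b / e) * h) • θ₁,
                 (Real.sqrt 2 * (a * b / e) / h) • θ₂,
                 -((Real.sqrt 2 * (a * b / e) / h) • θ₂),
                 (Real.sqrt 2 * (a * b / e) * h) • θ₁⟩)
    -- the tuple D := (x₁, x₂, −y, z | ξ₁⁺, ξ₂⁺, ξ₁⁻, ξ₂⁻) with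
    -- x₁ = √2·bd²/(ae), x₂ = √2·ac²/(be), y = √2·cd/e,
    -- ξ₁⁺ = −χ^{−1/2}yh⁻¹σ₁, ξ₂⁺ = −χ^{−1/2}yhσ₂, ξ₁⁻ = −χ^{1/2}yhσ₂,
    -- ξ₂⁻ = χ^{1/2}yh⁻¹σ₁, z = yσ₁σ₂/2
    (DT : STuple V)
    (hDT : DT = ⟨algebraMap ℝ _ (Real.sqrt 2 * (b * d ^ 2 / (a * e))),
                 algebraMap ℝ _ (Real.sqrt 2 * (a * c ^ 2 / (b * e))),
                 -(algebraMap ℝ _ (Real.sqrt 2 * (c * d / e))),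
                 (Real.sqrt 2 * (c * d / e) / 2) • (σ₁ * σ₂),
                 -(((Real.sqrt χ)⁻¹ * (Real.sqrt 2 * (c * d / e)) / h) • σ₁),
                 -(((Real.sqrt χ)⁻¹ * (Real.sqrt 2 * (c * d / e)) * h) • σ₂),
                 -((Real.sqrt χ * (Real.sqrt 2 * (c * d / e)) * h) • σ₂),
                 (Real.sqrt χ * (Real.sqrt 2 * (c * d / e)) / h) • σ₁⟩)
    -- the fermionic correction factor
    (C : ExteriorAlgebra ℝ V)
    (hC : C = 1 + ((h ^ 2)⁻¹ / (2 * (Real.sqrt χ + (Real.sqrt χ)⁻¹))) • (σ₁ * θ₂)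
        + (h ^ 2 / (2 * (Real.sqrt χ + (Real.sqrt χ)⁻¹))) • (σ₂ * θ₁)) :
    (e ^ 2 : ℝ) • spair BT DT = algebraMap ℝ _ ((a * c + b * d) ^ 2) * (C * C) := by
  subst hBT hDT hC hχ
  have t1t2 := odd_anticomm hθ₁ hθ₂
  have t1s1 := odd_anticomm hθ₁ hσ₁
  have t1s2 := odd_anticomm hθ₁ hσ₂
  have t2s1 := odd_anticomm hθ₂ hσ₁
  have t2s2 := odd_anticomm hθ₂ hσ₂
  have s1s2 := odd_anticomm hσ₁ hσ₂
  have ss1 := odd_sq hσ₁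
  have ss2 := odd_sq hσ₂
  have f4 : σ₁ * θ₂ * (σ₁ * θ₂) = 0 := by
    linear_combination (norm := noncomm_ring) σ₁ * t2s1 * θ₂ - ss1 * (θ₂ * θ₂)
  have f5 : σ₂ * θ₁ * (σ₂ * θ₁) = 0 := by
    linear_combination (norm := noncomm_ring) σ₂ * t1s2 * θ₁ - ss2 * (θ₁ * θ₁)
  have f6 : σ₁ * θ₂ * (σ₂ * θ₁) = θ₁ * θ₂ * (σ₁ * σ₂) := by
    linear_combination (norm := noncomm_ring) σ₁ * t2s2 * θ₁ - σ₁ * σ₂ * t1t2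
      + σ₁ * t1s2 * θ₂ - t1s1 * σ₂ * θ₂ + θ₁ * σ₁ * t2s2 - θ₁ * t2s1 * σ₂
  have f7 : σ₂ * θ₁ * (σ₁ * θ₂) = θ₁ * θ₂ * (σ₁ * σ₂) := by
    linear_combination (norm := noncomm_ring) σ₂ * t1s1 * θ₂ - s1s2 * (θ₁ * θ₂)
      + σ₁ * t1s2 * θ₂ - t1s1 * σ₂ * θ₂ + θ₁ * σ₁ * t2s2 - θ₁ * t2s1 * σ₂
  have ha' := ha.ne'
  have hb' := hb.ne'
  have hc' := hc.ne'
  have hd' := hd.ne'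
  have he' := he.ne'
  have hh' := hh.ne'
  obtain ⟨s, hs0, hsgen⟩ : ∃ s : ℝ, 0 < s ∧ Real.sqrt (a*c/(b*d)) = s :=
    ⟨_, Real.sqrt_pos.mpr (by positivity), rfl⟩
  obtain ⟨u, hu0, hugen⟩ : ∃ u : ℝ, 0 < u ∧ Real.sqrt 2 = u :=
    ⟨_, Real.sqrt_pos.mpr (by norm_num), rfl⟩
  have hss : s * s = a*c/(b*d) := by rw [← hsgen]; exact Real.mul_self_sqrt (by positivity)
  have hu : u * u = 2 := by rw [← hugen]; exact Real.mul_self_sqrt (by norm_num)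
  rw [hsgen, hugen] at *
  have hs' := hs0.ne'
  have hu' := hu0.ne'
  rw [spair]
  simp only [Algebra.algebraMap_eq_smul_one, smul_mul_assoc, mul_smul_comm, smul_smul,
    one_mul, mul_one, neg_mul, mul_neg, neg_neg, smul_neg, mul_add, add_mul, mul_sub,
    sub_mul, smul_add, smul_sub]
  rw [t1s2, t2s1, f4, f5, f6, f7]
  have hss' : s * s * (b * d) = a * c := by rw [hss]; field_simp
  match_scalars
  · field_simp
    linear_combination ((a*c + b*d)^2) * hu
  · field_simp
    linear_combination ((a*b*c*d)*(s^2+1)^2) * hu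
      + (2*(a*c*s^2 - b*d)) * hss'
  · field_simp
    linear_combination ((a*b*c*d)*(s^2+1)^2) * hu
      + (2*(a*c*s^2 - b*d)) * hss'
  · field_simp
    linear_combination ((a*b*c*d)*(s^2+1)^2) * hu
      + (2*(a*c*s^2 - b*d)) * hss'
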